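/- For connected graphs G and H, rc(G ⊠ H) = max{rc(G), rc(H)}, where ⊠ denotes the strong product. -/

import Mathlib

open SimpleGraph

/-- The cop's sequence of positions, given his initial vertex `c₀` and a
(history-dependent) strategy `F`, where `F n` determines the cop's `(n+1)`-st
position from the robber's positions `r 0, …, r n` seen so far. -/
def copSeq {V : Type*} (c₀ : V) (F : (n : ℕ) → (Fin (n + 1) → V) → V)
    (r : ℕ → V) : ℕ → V
  | 0 => c₀
  | n + 1 => F n (fun i : Fin (n + 1) => r i)

/-- The cop has a winning strategy in the cop and robber game with radius of
capture `k` on the graph `G`: the cop chooses a starting vertex and a strategy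
such that, against every legal play of the robber (at each step the robber
stays or moves to an adjacent vertex; his moves may depend on the whole
history), the cop's play is legal and at some point of the game the distance
between the two players is at most `k`. -/
def CopWinRC {V : Type*} (G : SimpleGraph V) (k : ℕ) : Prop :=
  ∃ (c₀ : V) (F : (n : ℕ) → (Fin (n + 1) → V) → V),
    ∀ r : ℕ → V,
      (∀ i, r (i + 1) = r i ∨ G.Adj (r i) (r (i + 1))) →
      ((∀ n, copSeq c₀ F r (n + 1) = copSeq c₀ F r n
            ∨ G.Adj (copSeq c₀ F r n) (copSeq c₀ F r (n + 1))) ∧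
        ∃ n, G.dist (copSeq c₀ F r n) (r n) ≤ k
           ∨ G.dist (copSeq c₀ F r (n + 1)) (r n) ≤ k)

/-- The radius capture number of `G`: the least `k` such that the cop wins
the cop and robber game with radius of capture `k`. -/
noncomputable def rcNum {V : Type*} (G : SimpleGraph V) : ℕ :=
  sInf {k | CopWinRC G k}

/-- Eccentricity of a vertex: the maximum distance to another vertex. -/
noncomputable def graphEcc {V : Type*} (G : SimpleGraph V) (v : V) : ℕ :=
  sSup (Set.range (G.dist v))

/-- Radius of a graph: the minimum eccentricity. -/
noncomputable def graphRad {V : Type*} (G : SimpleGraph V) : ℕ :=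
  sInf (Set.range (graphEcc G))

/-- The strong product of two graphs: `(g₁,h₁) ~ (g₂,h₂)` iff the two pairs
differ and in each coordinate the entries are equal or adjacent. -/
def strongProd {V W : Type*} (G : SimpleGraph V) (H : SimpleGraph W) :
    SimpleGraph (V × W) where
  Adj x y := x ≠ y ∧ (x.1 = y.1 ∨ G.Adj x.1 y.1) ∧ (x.2 = y.2 ∨ H.Adj x.2 y.2)
  symm := by
    refine ⟨?_⟩
    rintro x y ⟨hne, h1, h2⟩
    exact ⟨hne.symm, h1.imp Eq.symm (fun h => G.adj_symm h), h2.imp Eq.symm (fun h => H.adj_symm h)⟩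
  loopless := by
    refine ⟨?_⟩
    rintro x ⟨hne, -, -⟩
    exact hne rfl

section DistAux
variable {V W : Type*} {G : SimpleGraph V} {H : SimpleGraph W}

/-- Embedding `G` into the strong product at a fixed second coordinate. -/
def homLeft (w : W) : G →g strongProd G H :=
  ⟨fun a => (a, w), fun {a b} hab => ⟨by simp [hab.ne], Or.inr hab, Or.inl rfl⟩⟩

def homRight (v : V) : H →g strongProd G H :=
  ⟨fun b => (v, b), fun {a b} hab => ⟨by simp [hab.ne], Or.inl rfl, Or.inr hab⟩⟩

lemma exists_walk_max : ∀ {g g' : V} {h h' : W} (p : G.Walk g g') (q : H.Walk h h'),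
    ∃ w : (strongProd G H).Walk (g, h) (g', h'), w.length = max p.length q.length := by
  intro g g' h h' p
  induction p generalizing h with
  | nil =>
    intro q
    exact ⟨q.map (homRight (G := G) _), Walk.length_map _ _⟩
  | @cons a b c hadj p ih =>
    intro q
    cases q with
    | nil =>
      exact ⟨(Walk.cons hadj p).map (homLeft (H := H) _), Walk.length_map _ _⟩
    | @cons h₁ h₂ h₃ hadj' q' =>
      obtain ⟨w, hw⟩ := ih q'
      refine ⟨Walk.cons ⟨by simp [hadj.ne], Or.inr hadj, Or.inr hadj'⟩ w, ?_⟩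
      show w.length + 1 = _
      simp [hw, Nat.succ_max_succ]

lemma dist_fst_le {x y : V × W} (w : (strongProd G H).Walk x y) (hG : G.Connected) :
    G.dist x.1 y.1 ≤ w.length := by
  induction w with
  | nil => simp
  | cons hadj w ih =>
    rename_i a b c
    obtain ⟨-, h1, -⟩ := hadj
    calc G.dist a.1 c.1 ≤ G.dist a.1 b.1 + G.dist b.1 c.1 := hG.dist_triangle
      _ ≤ 1 + w.length := by
          gcongr
          rcases h1 with h | h
          · rw [h, SimpleGraph.dist_self]; omega
          · exact dist_le h.toWalk
      _ = w.length + 1 := by omega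

lemma dist_snd_le {x y : V × W} (w : (strongProd G H).Walk x y) (hH : H.Connected) :
    H.dist x.2 y.2 ≤ w.length := by
  induction w with
  | nil => simp
  | cons hadj w ih =>
    rename_i a b c
    obtain ⟨-, -, h2⟩ := hadj
    calc H.dist a.2 c.2 ≤ H.dist a.2 b.2 + H.dist b.2 c.2 := hH.dist_triangle
      _ ≤ 1 + w.length := by
          gcongr
          rcases h2 with h | h
          · rw [h, SimpleGraph.dist_self]; omega
          · exact dist_le h.toWalk
      _ = w.length + 1 := by omega

lemma strongProd_connected (hG : G.Connected) (hH : H.Connected) :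
    (strongProd G H).Connected := by
  have : Nonempty (V × W) := ⟨hG.nonempty.some, hH.nonempty.some⟩
  refine ⟨fun x y => ?_⟩
  obtain ⟨p, -⟩ := hG.exists_walk_length_eq_dist x.1 y.1
  obtain ⟨q, -⟩ := hH.exists_walk_length_eq_dist x.2 y.2
  obtain ⟨w, -⟩ := exists_walk_max p q
  exact ⟨w⟩

lemma dist_strongProd (hG : G.Connected) (hH : H.Connected) (x y : V × W) :
    (strongProd G H).dist x y = max (G.dist x.1 y.1) (H.dist x.2 y.2) := by
  refine le_antisymm ?_ ?_
  · obtain ⟨p, hp⟩ := hG.exists_walk_length_eq_dist x.1 y.1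
    obtain ⟨q, hq⟩ := hH.exists_walk_length_eq_dist x.2 y.2
    obtain ⟨w, hw⟩ := exists_walk_max p q
    calc (strongProd G H).dist x y ≤ w.length := dist_le w
      _ = _ := by rw [hw, hp, hq]
  · obtain ⟨w, hw⟩ := (strongProd_connected hG hH).exists_walk_length_eq_dist x y
    exact max_le (hw ▸ dist_fst_le w hG) (hw ▸ dist_snd_le w hH)

end DistAux

section GameAux
variable {V : Type*} {G : SimpleGraph V}

lemma dist_le_one_of_step {x y : V} (h : y = x ∨ G.Adj x y) : G.dist x y ≤ 1 := by
  rcases h with h | h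
  · rw [h, SimpleGraph.dist_self]; omega
  · exact dist_le h.toWalk

/-- A greedy step of the cop towards the robber along a shortest path. -/
noncomputable def stepToward (G : SimpleGraph V) (c r : V) : V :=
  open Classical in
  if h : ∃ v, G.Adj c v ∧ G.dist v r < G.dist c r then h.choose else c

lemma stepToward_legal (c r : V) :
    stepToward G c r = c ∨ G.Adj c (stepToward G c r) := by
  unfold stepToward
  split
  · next h => exact Or.inr h.choose_spec.1
  · exact Or.inl rfl

lemma dist_stepToward (hG : G.Connected) {c r : V} {k : ℕ} (h : G.dist c r ≤ k + 1) :
    G.dist (stepToward G c r) r ≤ k := by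
  rcases Nat.eq_zero_or_pos (G.dist c r) with h0 | h0
  · have : ¬ ∃ v, G.Adj c v ∧ G.dist v r < G.dist c r := by
      rintro ⟨v, -, hv⟩; omega
    rw [stepToward, dif_neg this]; omega
  · have hex : ∃ v, G.Adj c v ∧ G.dist v r < G.dist c r := by
      obtain ⟨p, hp⟩ := hG.exists_walk_length_eq_dist c r
      cases p with
      | nil => simp at h0
      | cons hadj p' =>
        refine ⟨_, hadj, ?_⟩
        have := dist_le p'
        simp at hp
        omega
    rw [stepToward, dif_pos hex]
    have := hex.choose_spec.2
    omega

/-- The "capture and hold" position sequence: follow `F` until within distance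
`k+1` of the robber, then move greedily to stay within distance `k`. -/
noncomputable def mixSeq (G : SimpleGraph V) (k : ℕ) (c₀ : V)
    (F : (n : ℕ) → (Fin (n + 1) → V) → V) (r : ℕ → V) : ℕ → V
  | 0 => c₀
  | n + 1 =>
    if G.dist (mixSeq G k c₀ F r n) (r n) ≤ k + 1 then
      stepToward G (mixSeq G k c₀ F r n) (r n)
    else F n (fun i : Fin (n + 1) => r i)

lemma mixSeq_congr (G : SimpleGraph V) (k : ℕ) (c₀ : V)
    (F : (n : ℕ) → (Fin (n + 1) → V) → V) (r r' : ℕ → V) :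
    ∀ n, (∀ i < n, r i = r' i) → mixSeq G k c₀ F r n = mixSeq G k c₀ F r' n := by
  intro n
  induction n with
  | zero => intro _; rfl
  | succ n ih =>
    intro hagree
    have h1 : mixSeq G k c₀ F r n = mixSeq G k c₀ F r' n :=
      ih fun i hi => hagree i (by omega)
    have h2 : r n = r' n := hagree n (by omega)
    have h3 : (fun i : Fin (n + 1) => r i) = fun i : Fin (n + 1) => r' i := by
      funext i; exact hagree i i.isLt
    simp only [mixSeq, h1, h2, h3]

/-- The capture-and-hold strategy as a history-dependent strategy. -/
noncomputable def mixF (G : SimpleGraph V) (k : ℕ) (c₀ : V)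
    (F : (n : ℕ) → (Fin (n + 1) → V) → V) : (n : ℕ) → (Fin (n + 1) → V) → V :=
  fun n hist =>
    mixSeq G k c₀ F (fun i => if h : i < n + 1 then hist ⟨i, h⟩ else hist 0) (n + 1)

lemma copSeq_mixF (G : SimpleGraph V) (k : ℕ) (c₀ : V)
    (F : (n : ℕ) → (Fin (n + 1) → V) → V) (r : ℕ → V) (n : ℕ) :
    copSeq c₀ (mixF G k c₀ F) r n = mixSeq G k c₀ F r n := by
  cases n with
  | zero => rfl
  | succ n =>
    show mixF G k c₀ F n (fun i : Fin (n + 1) => r i) = _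
    unfold mixF
    exact mixSeq_congr G k c₀ F _ r (n + 1) fun i hi => by simp [hi]

/-- From any winning strategy with radius `k`, one gets a strategy that
eventually keeps the robber within distance `k` forever. -/
lemma holdStrategy (hG : G.Connected) {k : ℕ} (hw : CopWinRC G k) :
    ∃ (c₀ : V) (F : (n : ℕ) → (Fin (n + 1) → V) → V),
      ∀ r : ℕ → V,
        (∀ i, r (i + 1) = r i ∨ G.Adj (r i) (r (i + 1))) →
        ((∀ n, copSeq c₀ F r (n + 1) = copSeq c₀ F r n
              ∨ G.Adj (copSeq c₀ F r n) (copSeq c₀ F r (n + 1))) ∧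
          ∃ N, ∀ n, N ≤ n → G.dist (copSeq c₀ F r (n + 1)) (r n) ≤ k) := by
  obtain ⟨c₀, F, hF⟩ := hw
  refine ⟨c₀, mixF G k c₀ F, fun r hr => ?_⟩
  obtain ⟨hleg, hcap⟩ := hF r hr
  set c : ℕ → V := mixSeq G k c₀ F r with hc
  have hcop : ∀ n, copSeq c₀ (mixF G k c₀ F) r n = c n := copSeq_mixF G k c₀ F r
  -- the robber moves distance at most 1
  have hrstep : ∀ n, G.dist (r n) (r (n + 1)) ≤ 1 := fun n =>
    dist_le_one_of_step ((hr n).imp id fun h => h)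
  -- persistence of the trigger
  have hpers : ∀ n, G.dist (c n) (r n) ≤ k + 1 →
      G.dist (c (n + 1)) (r n) ≤ k ∧ G.dist (c (n + 1)) (r (n + 1)) ≤ k + 1 := by
    intro n htrig
    have hstep : c (n + 1) = stepToward G (c n) (r n) := by
      show mixSeq G k c₀ F r (n + 1) = _
      rw [mixSeq, if_pos htrig]
    have h1 : G.dist (c (n + 1)) (r n) ≤ k := by
      rw [hstep]; exact dist_stepToward hG htrig
    refine ⟨h1, ?_⟩
    calc G.dist (c (n + 1)) (r (n + 1))
        ≤ G.dist (c (n + 1)) (r n) + G.dist (r n) (r (n + 1)) := hG.dist_triangle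
      _ ≤ k + 1 := by have := hrstep n; omega
  -- while the trigger has not fired, the play follows `F`
  have hpure : ∀ n, ¬ G.dist (c n) (r n) ≤ k + 1 → c n = copSeq c₀ F r n := by
    intro n
    induction n with
    | zero => intro _; rfl
    | succ n ih =>
      intro hn
      have hnn : ¬ G.dist (c n) (r n) ≤ k + 1 := fun ht => hn (hpers n ht).2
      show mixSeq G k c₀ F r (n + 1) = _
      rw [mixSeq, if_neg hnn]
      rfl
  -- the trigger fires at some time
  have htrigEx : ∃ N, G.dist (c N) (r N) ≤ k + 1 := by
    by_contra hno
    push_neg at hno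
    have hall : ∀ n, c n = copSeq c₀ F r n := fun n => hpure n (by have := hno n; omega)
    obtain ⟨n, hn | hn⟩ := hcap
    · exact absurd (hall n ▸ hn) (by have := hno n; omega)
    · have : G.dist (c (n + 1)) (r (n + 1)) ≤ k + 1 := by
        calc G.dist (c (n + 1)) (r (n + 1))
            ≤ G.dist (c (n + 1)) (r n) + G.dist (r n) (r (n + 1)) := hG.dist_triangle
          _ ≤ k + 1 := by
              rw [hall (n + 1)]
              have := hrstep n; omega
      exact absurd this (by have := hno (n + 1); omega)
  obtain ⟨N, hN⟩ := htrigEx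
  have htrigAll : ∀ m, G.dist (c (N + m)) (r (N + m)) ≤ k + 1 := by
    intro m
    induction m with
    | zero => exact hN
    | succ m ih => rw [Nat.add_succ]; exact (hpers (N + m) ih).2
  constructor
  · intro n
    simp only [hcop]
    by_cases ht : G.dist (c n) (r n) ≤ k + 1
    · have hstep : c (n + 1) = stepToward G (c n) (r n) := by
        show mixSeq G k c₀ F r (n + 1) = _
        rw [mixSeq, if_pos ht]
      rw [hstep]
      exact stepToward_legal (c n) (r n)
    · have h1 : c n = copSeq c₀ F r n := hpure n ht
      have h2 : c (n + 1) = copSeq c₀ F r (n + 1) := by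
        show mixSeq G k c₀ F r (n + 1) = _
        rw [mixSeq, if_neg ht]
        rfl
      rw [h1, h2]
      exact hleg n
  · refine ⟨N, fun n hn => ?_⟩
    rw [hcop]
    obtain ⟨m, rfl⟩ := Nat.exists_eq_add_of_le hn
    exact (hpers (N + m) (htrigAll m)).1

end GameAux

section Aux
variable {V W : Type*} {G : SimpleGraph V} {H : SimpleGraph W}

/-- A trivially winning radius: the maximum distance in a finite graph. -/
lemma copWin_nonempty [Fintype V] (hG : G.Connected) : {k | CopWinRC G k}.Nonempty := by
  classical
  have : Nonempty V := hG.nonempty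
  set c₀ : V := Classical.arbitrary V
  refine ⟨Finset.univ.sup (fun p : V × V => G.dist p.1 p.2), c₀, fun _ _ => c₀, fun r hr => ?_⟩
  have hcop : ∀ n, copSeq c₀ (fun _ _ => c₀) r n = c₀ := by
    intro n; cases n <;> rfl
  constructor
  · intro n; rw [hcop, hcop]; exact Or.inl rfl
  · refine ⟨0, Or.inl ?_⟩
    rw [hcop]
    exact Finset.le_sup (f := fun p : V × V => G.dist p.1 p.2)
      (Finset.mem_univ (c₀, r 0))

lemma copWin_fst (hG : G.Connected) (hH : H.Connected) {K : ℕ}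
    (hw : CopWinRC (strongProd G H) K) : CopWinRC G K := by
  obtain ⟨c₀, F, hF⟩ := hw
  have : Nonempty W := hH.nonempty
  set w₀ : W := Classical.arbitrary W
  refine ⟨c₀.1, fun n hist => (F n (fun i => (hist i, w₀))).1, fun r hr => ?_⟩
  set r' : ℕ → V × W := fun i => (r i, w₀) with hr'
  have hr'leg : ∀ i, r' (i + 1) = r' i ∨ (strongProd G H).Adj (r' i) (r' (i + 1)) := by
    intro i
    rcases hr i with h | h
    · exact Or.inl (by simp [hr', h])
    · exact Or.inr ⟨by simp [hr', h.ne], Or.inr h, Or.inl rfl⟩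
  obtain ⟨hleg, n, hcap⟩ := hF r' hr'leg
  have hproj : ∀ n, copSeq c₀.1 (fun n hist => (F n (fun i => (hist i, w₀))).1) r n
      = (copSeq c₀ F r' n).1 := by
    intro n; cases n <;> rfl
  constructor
  · intro n
    rw [hproj, hproj]
    rcases hleg n with h | ⟨-, h1, -⟩
    · exact Or.inl (by rw [h])
    · exact h1.imp Eq.symm id
  · refine ⟨n, ?_⟩
    rcases hcap with h | h
    · rw [dist_strongProd hG hH] at h
      exact Or.inl (by rw [hproj]; exact le_trans (le_max_left _ _) h)
    · rw [dist_strongProd hG hH] at h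
      exact Or.inr (by rw [hproj]; exact le_trans (le_max_left _ _) h)

lemma copWin_snd (hG : G.Connected) (hH : H.Connected) {K : ℕ}
    (hw : CopWinRC (strongProd G H) K) : CopWinRC H K := by
  obtain ⟨c₀, F, hF⟩ := hw
  have : Nonempty V := hG.nonempty
  set v₀ : V := Classical.arbitrary V
  refine ⟨c₀.2, fun n hist => (F n (fun i => (v₀, hist i))).2, fun r hr => ?_⟩
  set r' : ℕ → V × W := fun i => (v₀, r i) with hr'
  have hr'leg : ∀ i, r' (i + 1) = r' i ∨ (strongProd G H).Adj (r' i) (r' (i + 1)) := by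
    intro i
    rcases hr i with h | h
    · exact Or.inl (by simp [hr', h])
    · exact Or.inr ⟨by simp [hr', h.ne], Or.inl rfl, Or.inr h⟩
  obtain ⟨hleg, n, hcap⟩ := hF r' hr'leg
  have hproj : ∀ n, copSeq c₀.2 (fun n hist => (F n (fun i => (v₀, hist i))).2) r n
      = (copSeq c₀ F r' n).2 := by
    intro n; cases n <;> rfl
  constructor
  · intro n
    rw [hproj, hproj]
    rcases hleg n with h | ⟨-, -, h2⟩
    · exact Or.inl (by rw [h])
    · exact h2.imp Eq.symm id
  · refine ⟨n, ?_⟩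
    rcases hcap with h | h
    · rw [dist_strongProd hG hH] at h
      exact Or.inl (by rw [hproj]; exact le_trans (le_max_right _ _) h)
    · rw [dist_strongProd hG hH] at h
      exact Or.inr (by rw [hproj]; exact le_trans (le_max_right _ _) h)

lemma copWin_prod (hG : G.Connected) (hH : H.Connected) {k₁ k₂ : ℕ}
    (h1 : CopWinRC G k₁) (h2 : CopWinRC H k₂) :
    CopWinRC (strongProd G H) (max k₁ k₂) := by
  obtain ⟨a₀, FG, hFG⟩ := holdStrategy hG h1
  obtain ⟨b₀, FH, hFH⟩ := holdStrategy hH h2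
  refine ⟨(a₀, b₀), fun n hist => (FG n (fun i => (hist i).1), FH n (fun i => (hist i).2)),
    fun r hr => ?_⟩
  set F : (n : ℕ) → (Fin (n + 1) → V × W) → V × W :=
    fun n hist => (FG n (fun i => (hist i).1), FH n (fun i => (hist i).2)) with hF
  have hproj1 : ∀ n, (copSeq (a₀, b₀) F r n).1 = copSeq a₀ FG (fun i => (r i).1) n := by
    intro n; cases n <;> rfl
  have hproj2 : ∀ n, (copSeq (a₀, b₀) F r n).2 = copSeq b₀ FH (fun i => (r i).2) n := by
    intro n; cases n <;> rfl
  have hr1 : ∀ i, (r (i+1)).1 = (r i).1 ∨ G.Adj (r i).1 (r (i+1)).1 := by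
    intro i
    rcases hr i with h | ⟨-, h1, -⟩
    · exact Or.inl (by rw [h])
    · exact h1.imp Eq.symm id
  have hr2 : ∀ i, (r (i+1)).2 = (r i).2 ∨ H.Adj (r i).2 (r (i+1)).2 := by
    intro i
    rcases hr i with h | ⟨-, -, h2⟩
    · exact Or.inl (by rw [h])
    · exact h2.imp Eq.symm id
  obtain ⟨hleg1, N₁, hcap1⟩ := hFG (fun i => (r i).1) hr1
  obtain ⟨hleg2, N₂, hcap2⟩ := hFH (fun i => (r i).2) hr2
  constructor
  · intro n
    by_cases he : copSeq (a₀, b₀) F r (n + 1) = copSeq (a₀, b₀) F r n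
    · exact Or.inl he
    · refine Or.inr ⟨fun h => he h.symm, ?_, ?_⟩
      · have := hleg1 n
        rw [← hproj1, ← hproj1] at this
        exact this.imp Eq.symm id
      · have := hleg2 n
        rw [← hproj2, ← hproj2] at this
        exact this.imp Eq.symm id
  · refine ⟨max N₁ N₂, Or.inr ?_⟩
    rw [dist_strongProd hG hH]
    refine max_le ?_ ?_
    · rw [hproj1]
      exact le_trans (hcap1 _ (le_max_left _ _)) (le_max_left _ _)
    · rw [hproj2]
      exact le_trans (hcap2 _ (le_max_right _ _)) (le_max_right _ _)

end Aux

/-- For connected graphs `G` and `H`, `rc(G ⊠ H) = max (rc G) (rc H)`. -/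
theorem rcNum_strongProd {V W : Type*} [Fintype V] [Fintype W]
    (G : SimpleGraph V) (H : SimpleGraph W)
    (hG : G.Connected) (hH : H.Connected) :
    rcNum (strongProd G H) = max (rcNum G) (rcNum H) := by
  classical
  have hPconn : (strongProd G H).Connected := strongProd_connected hG hH
  have hGne := copWin_nonempty hG
  have hHne := copWin_nonempty hH
  have hPne : {k | CopWinRC (strongProd G H) k}.Nonempty := copWin_nonempty hPconn
  have hGmem : CopWinRC G (rcNum G) := Nat.sInf_mem hGne
  have hHmem : CopWinRC H (rcNum H) := Nat.sInf_mem hHne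
  have hPmem : CopWinRC (strongProd G H) (rcNum (strongProd G H)) := Nat.sInf_mem hPne
  refine le_antisymm ?_ ?_
  · exact Nat.sInf_le (copWin_prod hG hH hGmem hHmem)
  · refine max_le ?_ ?_
    · exact Nat.sInf_le (copWin_fst hG hH hPmem)
    · exact Nat.sInf_le (copWin_snd hG hH hPmem)
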